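/- If R is a left fusible ring, then the formal power series ring R[[x]] is left fusible. -/

import Mathlib

/-- `a` is a left zero-divisor of `R`. -/
def IsLeftZeroDivisor {R : Type*} [Ring R] (a : R) : Prop :=
  ∃ r : R, r ≠ 0 ∧ a * r = 0

/-- A ring is left fusible if every nonzero element is the sum of a left
zero-divisor and a non-left-zero-divisor. -/
def LeftFusible (R : Type*) [Ring R] : Prop :=
  ∀ a : R, a ≠ 0 → ∃ b c : R, IsLeftZeroDivisor b ∧ ¬ IsLeftZeroDivisor c ∧ a = b + c

/-- If `R` is left fusible, then the power series ring `R[[x]]` is left fusible. -/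
theorem leftFusible_powerSeries {R : Type*} [Ring R] (hR : LeftFusible R) :
    LeftFusible (PowerSeries R) := by
  classical
  intro f hf
  have hex : ∃ n, PowerSeries.coeff n f ≠ 0 := by
    by_contra h
    push_neg at h
    exact hf (PowerSeries.ext fun n => by simp [h n])
  set n := Nat.find hex with hn_def
  have hn : PowerSeries.coeff n f ≠ 0 := Nat.find_spec hex
  have hlt : ∀ m < n, PowerSeries.coeff m f = 0 := by
    intro m hm
    by_contra h
    exact absurd (Nat.find_le h) (not_le.mpr hm)
  obtain ⟨b, c, ⟨r, hr0, hbr⟩, hc, hbc⟩ := hR _ hn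
  set B : PowerSeries R := PowerSeries.monomial n b with hB
  refine ⟨B, f - B, ?_, ?_, by abel⟩
  · refine ⟨PowerSeries.monomial 0 r, ?_, ?_⟩
    · intro h
      apply hr0
      have := congrArg (PowerSeries.coeff 0) h
      simpa using this
    · rw [hB]
      ext k
      rw [map_zero, PowerSeries.coeff_mul]
      apply Finset.sum_eq_zero
      rintro ⟨i, j⟩ _
      simp only [PowerSeries.coeff_monomial]
      by_cases hi : i = n <;> by_cases hj : j = 0 <;> simp [hi, hj, hbr]
  · rintro ⟨g, hg0, hg⟩
    have hexg : ∃ m, PowerSeries.coeff m g ≠ 0 := by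
      by_contra h
      push_neg at h
      exact hg0 (PowerSeries.ext fun m => by simp [h m])
    set m := Nat.find hexg with hm_def
    have hm : PowerSeries.coeff m g ≠ 0 := Nat.find_spec hexg
    have hltg : ∀ k < m, PowerSeries.coeff k g = 0 := by
      intro k hk
      by_contra h
      exact absurd (Nat.find_le h) (not_le.mpr hk)
    apply hc
    refine ⟨PowerSeries.coeff m g, hm, ?_⟩
    have key : PowerSeries.coeff (n + m) ((f - B) * g) = c * PowerSeries.coeff m g := by
      rw [PowerSeries.coeff_mul]
      rw [Finset.sum_eq_single (n, m)]
      · have : PowerSeries.coeff n (f - B) = c := by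
          simp [hB, PowerSeries.coeff_monomial, hbc]
        rw [this]
      · rintro ⟨i, j⟩ hij hne
        rw [Finset.HasAntidiagonal.mem_antidiagonal] at hij
        rcases lt_trichotomy i n with hi | hi | hi
        · have : PowerSeries.coeff i (f - B) = 0 := by
            simp [hB, PowerSeries.coeff_monomial, hlt i hi, hi.ne]
          rw [this, zero_mul]
        · exfalso
          apply hne
          subst hi
          have : j = m := by omega
          simp [this]
        · have : j < m := by omega
          rw [hltg j this, mul_zero]
      · intro h
        exact absurd (by simp : (n, m) ∈ Finset.HasAntidiagonal.antidiagonal (n + m)) h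
    rw [hg] at key
    simpa using key.symm
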